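/- Let X be a Banach space, {x_n} ⊂ X a co-frame and {y_n} ⊂ X* a frame (with respect to a sequence space X_d as in the standing assumptions). Then there exists a bounded invertible operator T : X → X such that {T x_n} is an alternate dual frame for {y_n} if and only if the operator U : X → X defined by Ux = Σ_n y_n(x) x_n is bounded and invertible. -/
import Mathlib


/-- Theorem 6 of the paper: Let {x_n} ⊂ X be a co-frame and
{y_n} ⊂ X* a frame. There exists a bounded invertible T : X → X with {T x_n} an
alternate dual frame for {y_n} (i.e. {T x_n} is a co-frame and x = Σ y_n(x) T x_n)
iff the operator U x = Σ_n y_n(x) x_n is bounded and invertible. -/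
theorem stmt9 {X W : Type*} [NormedAddCommGroup X] [NormedSpace ℂ X] [CompleteSpace X]
    [NormedAddCommGroup W] [NormedSpace ℂ W] [CompleteSpace W]
    (ι : W →ₗ[ℂ] (ℕ → ℂ)) (hι : Function.Injective ι)
    (e : ℕ → W) (he : ∀ n, ι (e n) = fun j => if n = j then (1 : ℂ) else 0)
    (hbasis : ∀ a : W, HasSum (fun n => ι a n • e n) a)
    (x : ℕ → X) (y : ℕ → (X →L[ℂ] ℂ))
    -- {y_n} is a frame:
    (R : X → W) (hR : ∀ (v : X) (n : ℕ), ι (R v) n = y n v)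
    (A B : ℝ) (hA : 0 < A) (hB : 0 < B)
    (hframe : ∀ v : X, A * ‖v‖ ≤ ‖R v‖ ∧ ‖R v‖ ≤ B * ‖v‖)
    -- {x_n} is a co-frame:
    (Rc : (X →L[ℂ] ℂ) → (W →L[ℂ] ℂ))
    (hRc : ∀ (g : X →L[ℂ] ℂ) (n : ℕ), Rc g (e n) = g (x n))
    (At Bt : ℝ) (hAt : 0 < At) (hBt : 0 < Bt)
    (hcoframe : ∀ g : X →L[ℂ] ℂ, At * ‖g‖ ≤ ‖Rc g‖ ∧ ‖Rc g‖ ≤ Bt * ‖g‖) :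
    (∃ T : X ≃L[ℂ] X,
      -- {T x_n} is a co-frame:
      (∃ Rc' : (X →L[ℂ] ℂ) → (W →L[ℂ] ℂ),
        (∀ (g : X →L[ℂ] ℂ) (n : ℕ), Rc' g (e n) = g (T (x n))) ∧
        ∃ At' Bt' : ℝ, 0 < At' ∧ 0 < Bt' ∧
          ∀ g : X →L[ℂ] ℂ, At' * ‖g‖ ≤ ‖Rc' g‖ ∧ ‖Rc' g‖ ≤ Bt' * ‖g‖) ∧
      -- and it is alternate dual for {y_n}:
      (∀ v : X, HasSum (fun n => y n v • T (x n)) v)) ↔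
    (∃ U : X ≃L[ℂ] X, ∀ v : X, HasSum (fun n => y n v • x n) (U v)) := by

  constructor
  · rintro ⟨T, -, hdual⟩
    refine ⟨T.symm, fun v => ?_⟩
    have h := (T.symm : X →L[ℂ] X).hasSum (hdual v)
    simpa using h
  · rintro ⟨U, hU⟩
    refine ⟨U.symm, ⟨fun g => Rc (g.comp (U.symm : X →L[ℂ] X)), fun g n => by
      simpa using hRc (g.comp (U.symm : X →L[ℂ] X)) n,
      At / (‖(U : X →L[ℂ] X)‖ + 1), Bt * (‖(U.symm : X →L[ℂ] X)‖ + 1),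
      div_pos hAt (by positivity), by positivity, fun g => ?_⟩, fun v => ?_⟩
    · set g' := g.comp (U.symm : X →L[ℂ] X) with hg'
      have h1 := (hcoframe g').1
      have h2 := (hcoframe g').2
      constructor
      · have hge : ‖g‖ ≤ ‖g'‖ * (‖(U : X →L[ℂ] X)‖ + 1) := by
          have : g = g'.comp (U : X →L[ℂ] X) := by
            ext w; simp [hg']
          calc ‖g‖ = ‖g'.comp (U : X →L[ℂ] X)‖ := by rw [← this]
            _ ≤ ‖g'‖ * ‖(U : X →L[ℂ] X)‖ := ContinuousLinearMap.opNorm_comp_le _ _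
            _ ≤ ‖g'‖ * (‖(U : X →L[ℂ] X)‖ + 1) := by
                have := norm_nonneg g'
                nlinarith
        have hpos : (0:ℝ) < ‖(U : X →L[ℂ] X)‖ + 1 := by positivity
        rw [div_mul_eq_mul_div, div_le_iff₀ hpos]
        calc At * ‖g‖ ≤ At * (‖g'‖ * (‖(U : X →L[ℂ] X)‖ + 1)) := by nlinarith
          _ = At * ‖g'‖ * (‖(U : X →L[ℂ] X)‖ + 1) := by ring
          _ ≤ ‖Rc g'‖ * (‖(U : X →L[ℂ] X)‖ + 1) := by nlinarith
      · have hle : ‖g'‖ ≤ ‖g‖ * ‖(U.symm : X →L[ℂ] X)‖ :=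
          ContinuousLinearMap.opNorm_comp_le _ _
        have h0 := norm_nonneg g
        have h1' := norm_nonneg (U.symm : X →L[ℂ] X)
        calc ‖Rc g'‖ ≤ Bt * ‖g'‖ := h2
          _ ≤ Bt * (‖g‖ * ‖(U.symm : X →L[ℂ] X)‖) := by nlinarith
          _ ≤ Bt * (‖(U.symm : X →L[ℂ] X)‖ + 1) * ‖g‖ := by nlinarith
    · have h := (U.symm : X →L[ℂ] X).hasSum (hU v)
      simpa using h
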